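/- Let σ be a fixed-point-free involution on a finite set V and let C and D be two acceptable cycles for σ whose supports have no two points in the same 2-cycle of σ (i.e., for every x in the support of C and y in the support of D, σ(x) ≠ y and x ≠ y). Then C and D commute as permutations, and the product σ ∘ (C C') ∘ (D D') (with companion cycles C', D') is again a fixed-point-free involution. -/

import Mathlib

private lemma aux12 {V : Type*} [Fintype V] [DecidableEq V]
    (σ D : Equiv.Perm V)
    (hinv : ∀ x, σ (σ x) = x) (hfpf : ∀ x, σ x ≠ x)
    (hacc : ∀ x y, D x ≠ x → D y ≠ y → σ x ≠ y) :
    ∀ x, (D * (σ * D⁻¹ * σ)) x ≠ σ x := by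
  intro x
  simp only [Equiv.Perm.mul_apply]
  by_cases h : D (σ x) = σ x
  · have h0 : D⁻¹ (σ x) = σ x := by
      rw [Equiv.Perm.inv_eq_iff_eq]; exact h.symm
    rw [h0, hinv]
    by_cases hx : D x = x
    · rw [hx]; exact fun e => hfpf x e.symm
    · intro e
      have h2 : D (D x) ≠ D x := fun e2 => hx (D.injective e2)
      rw [e] at h2; exact h2 h
  · have hx : D x = x := by
      by_contra hx; exact hacc x (σ x) hx h rfl
    have hz : D (D⁻¹ (σ x)) = σ x := Equiv.apply_symm_apply D _
    have hzm : D (D⁻¹ (σ x)) ≠ D⁻¹ (σ x) := by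
      rw [hz]; intro e; rw [← e] at hz; exact h hz
    have h2 : D (σ (D⁻¹ (σ x))) = σ (D⁻¹ (σ x)) := by
      by_contra hne; exact hacc _ _ hzm hne rfl
    rw [h2]
    intro e
    have hzx : D⁻¹ (σ x) = x := σ.injective e
    rw [hzx, hx] at hz
    exact hfpf x hz.symm

/-- Two compatible acceptable cycles `C` and `D` for a fixed-point-free
involution `σ` commute, and multiplying `σ` by both cycles together with
their companion cycles (`C' = σC⁻¹σ`, `D' = σD⁻¹σ`) again yields a
fixed-point-free involution (a perfect matching). -/
theorem stmt12 {V : Type*} [Fintype V] [DecidableEq V]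
    (σ C D : Equiv.Perm V)
    (hinv : ∀ x, σ (σ x) = x) (hfpf : ∀ x, σ x ≠ x)
    (hC : C.IsCycle) (hD : D.IsCycle)
    (haccC : ∀ x ∈ C.support, ∀ y ∈ C.support, σ x ≠ y)
    (haccD : ∀ x ∈ D.support, ∀ y ∈ D.support, σ x ≠ y)
    (hcompat : ∀ x ∈ C.support, ∀ y ∈ D.support, σ x ≠ y ∧ x ≠ y) :
    C * D = D * C ∧
    (∀ x, (σ * (C * (σ * C⁻¹ * σ)) * (D * (σ * D⁻¹ * σ)))
        ((σ * (C * (σ * C⁻¹ * σ)) * (D * (σ * D⁻¹ * σ))) x) = x) ∧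
    (∀ x, (σ * (C * (σ * C⁻¹ * σ)) * (D * (σ * D⁻¹ * σ))) x ≠ x) := by
  have hσ2 : σ * σ = 1 := by ext x; simp [hinv x]
  have hsinv : σ⁻¹ = σ := by
    rw [inv_eq_iff_mul_eq_one]; exact hσ2
  -- if conjugate moves x then P moves σ x
  have hconj : ∀ (P : Equiv.Perm V) x, (σ * P⁻¹ * σ) x ≠ x → P (σ x) ≠ σ x := by
    intro P x h hPx
    apply h
    simp only [Equiv.Perm.mul_apply]
    have h0 : P⁻¹ (σ x) = σ x := by
      rw [Equiv.Perm.inv_eq_iff_eq]; exact hPx.symm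
    rw [h0, hinv]
  have dCD : C.Disjoint D := by
    intro x
    by_contra h
    push_neg at h
    exact (hcompat x (Equiv.Perm.mem_support.mpr h.1) x (Equiv.Perm.mem_support.mpr h.2)).2 rfl
  have dCC' : C.Disjoint (σ * C⁻¹ * σ) := by
    intro x
    by_contra h
    push_neg at h
    exact haccC x (Equiv.Perm.mem_support.mpr h.1) (σ x)
      (Equiv.Perm.mem_support.mpr (hconj C x h.2)) rfl
  have dDD' : D.Disjoint (σ * D⁻¹ * σ) := by
    intro x
    by_contra h
    push_neg at h
    exact haccD x (Equiv.Perm.mem_support.mpr h.1) (σ x)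
      (Equiv.Perm.mem_support.mpr (hconj D x h.2)) rfl
  have dCD' : C.Disjoint (σ * D⁻¹ * σ) := by
    intro x
    by_contra h
    push_neg at h
    exact (hcompat x (Equiv.Perm.mem_support.mpr h.1) (σ x)
      (Equiv.Perm.mem_support.mpr (hconj D x h.2))).1 rfl
  have dC'D : (σ * C⁻¹ * σ).Disjoint D := by
    intro x
    by_contra h
    push_neg at h
    exact (hcompat (σ x) (Equiv.Perm.mem_support.mpr (hconj C x h.1)) x
      (Equiv.Perm.mem_support.mpr h.2)).1 (hinv x)
  have dC'D' : (σ * C⁻¹ * σ).Disjoint (σ * D⁻¹ * σ) := by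
    intro x
    by_contra h
    push_neg at h
    exact (hcompat (σ x) (Equiv.Perm.mem_support.mpr (hconj C x h.1)) (σ x)
      (Equiv.Perm.mem_support.mpr (hconj D x h.2))).2 rfl
  set A := C * (σ * C⁻¹ * σ) with hA_def
  set B := D * (σ * D⁻¹ * σ) with hB_def
  have dAB : A.Disjoint B :=
    (dCD.mul_right dCD').mul_left (dC'D.mul_right dC'D')
  have hAB : A * B = B * A := dAB.commute
  have h1 : σ * A * σ = A⁻¹ := by
    have e1 : A⁻¹ = σ * C * σ * C⁻¹ := by
      simp only [hA_def, mul_inv_rev, inv_inv, hsinv, mul_assoc]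
    rw [e1, show σ * A * σ = σ * C * σ * C⁻¹ * (σ * σ) from by
      simp only [hA_def]; group, hσ2, mul_one]
  have h2 : σ * B * σ = B⁻¹ := by
    have e1 : B⁻¹ = σ * D * σ * D⁻¹ := by
      simp only [hB_def, mul_inv_rev, inv_inv, hsinv, mul_assoc]
    rw [e1, show σ * B * σ = σ * D * σ * D⁻¹ * (σ * σ) from by
      simp only [hB_def]; group, hσ2, mul_one]
  have hff : (σ * A * B) * (σ * A * B) = 1 := by
    have e : (σ * A * σ) * (σ * B * σ) * (A * B) = (σ * A * B) * (σ * A * B) := by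
      rw [show (σ * A * σ) * (σ * B * σ) * (A * B)
          = σ * A * (σ * σ) * B * (σ * (A * B)) from by group, hσ2]
      group
    rw [← e, h1, h2, hAB]
    group
  have hBne := aux12 σ D hinv hfpf
    (fun x y hx hy => haccD x (Equiv.Perm.mem_support.mpr hx) y (Equiv.Perm.mem_support.mpr hy))
  have hAne := aux12 σ C hinv hfpf
    (fun x y hx hy => haccC x (Equiv.Perm.mem_support.mpr hx) y (Equiv.Perm.mem_support.mpr hy))
  refine ⟨dCD.commute, ?_, ?_⟩
  · intro x
    rw [← Equiv.Perm.mul_apply, hff]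
    rfl
  · intro x
    simp only [Equiv.Perm.mul_apply]
    by_cases hB : B x = x
    · rw [hB]
      by_cases hA : A x = x
      · rw [hA]; exact hfpf x
      · exact fun e => hAne x (by rw [← hinv (A x), e])
    · have hABx : A (B x) = B x :=
        (dAB (B x)).resolve_right (fun e => hB (B.injective e))
      rw [hABx]
      exact fun e => hBne x (by rw [← hinv (B x), e])
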